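/- Let Π be the orthogonal projection of W onto the finite-dimensional subspace Ŵ = ∑ᵢ im φ(uᵢ), and let Φ ∈ B(Uⁿ, W) be given by Φ(v₁,…,vₙ) = ∑ᵢ φ(uᵢ) vᵢ. Then there exists a self-adjoint operator N ∈ B(Uⁿ) such that Π = Φ N Φ*. -/

import Mathlib

open ContinuousLinearMap RealInnerProductSpace

instance piLpCompleteSpace {ι : Type*} [Fintype ι] (U : Type*) [NormedAddCommGroup U]
    [InnerProductSpace ℝ U] [CompleteSpace U] :
    CompleteSpace (PiLp 2 (fun _ : ι => U)) :=
  inferInstance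

/-- The orthogonal projection onto `Ŵ = ∑ᵢ im φ(uᵢ)` can be written as
`Φ N Φ*` for a self-adjoint `N ∈ B(Uⁿ)`. -/
theorem projection_eq_Phi_N_Phi_star
    {U W : Type*} [NormedAddCommGroup U] [InnerProductSpace ℝ U]
    [FiniteDimensional ℝ U]
    [NormedAddCommGroup W] [InnerProductSpace ℝ W] [CompleteSpace W]
    (n : ℕ) (u : Fin n → U) (φ : U → (U →L[ℝ] W))
    (Φ : PiLp 2 (fun _ : Fin n => U) →L[ℝ] W)
    (hΦ : ∀ v : PiLp 2 (fun _ : Fin n => U), Φ v = ∑ i, φ (u i) (v i))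
    (Pr : W →L[ℝ] W)
    (hidem : Pr.comp Pr = Pr)
    (hsa : ContinuousLinearMap.adjoint Pr = Pr)
    (hrange : LinearMap.range (Pr : W →ₗ[ℝ] W)
      = ∑ i, LinearMap.range ((φ (u i) : U →ₗ[ℝ] W))) :
    ∃ N : PiLp 2 (fun _ : Fin n => U) →L[ℝ] PiLp 2 (fun _ : Fin n => U),
      ContinuousLinearMap.adjoint N = N ∧
      Pr = Φ.comp (N.comp (ContinuousLinearMap.adjoint Φ)) := by
  set E := PiLp 2 (fun _ : Fin n => U) with hE
  haveI : FiniteDimensional ℝ E :=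
    inferInstance
  set Φs : W →L[ℝ] E := ContinuousLinearMap.adjoint Φ with hΦsdef
  set G : E →L[ℝ] E := Φs.comp Φ with hGdef
  have hGsym : ∀ x y : E, ⟪G x, y⟫ = ⟪x, G y⟫ := by
    intro x y
    simp only [hGdef, ContinuousLinearMap.comp_apply, hΦsdef,
      ContinuousLinearMap.adjoint_inner_left, ContinuousLinearMap.adjoint_inner_right]
  have hker : ∀ x : E, G x = 0 ↔ Φ x = 0 := by
    intro x
    constructor
    · intro h
      have h2 : ⟪Φ x, Φ x⟫ = 0 := by
        have h3 : ⟪G x, x⟫ = ⟪Φ x, Φ x⟫ := by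
          simp [hGdef, hΦsdef, ContinuousLinearMap.adjoint_inner_left]
        rw [← h3, h, inner_zero_left]
      exact inner_self_eq_zero.mp h2
    · intro h
      simp [hGdef, ContinuousLinearMap.comp_apply, h]
  set K : Submodule ℝ E := (LinearMap.ker (G : E →ₗ[ℝ] E))ᗮ with hK
  have hGK : ∀ x : E, G x ∈ K := by
    intro x
    rw [hK, Submodule.mem_orthogonal]
    intro y hy
    rw [LinearMap.mem_ker, ContinuousLinearMap.coe_coe] at hy
    rw [real_inner_comm, hGsym, hy, inner_zero_right]
  set g : K →ₗ[ℝ] K := (G : E →ₗ[ℝ] E).restrict (fun x _ => hGK x) with hg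
  have hgcoe : ∀ v : K, (g v : E) = G (v : E) := fun v => rfl
  have hginj : Function.Injective g := by
    intro a b hab
    have h0 : G ((a : E) - b) = 0 := by
      have h1 := congrArg (Subtype.val) hab
      simp only [hgcoe] at h1
      simp [map_sub, h1]
    have hmem : ((a : E) - b) ∈ LinearMap.ker (G : E →ₗ[ℝ] E) := h0
    have hmem' : ((a : E) - b) ∈ K := K.sub_mem a.2 b.2
    have h2 : ⟪(a : E) - b, (a : E) - b⟫ = 0 :=
      (Submodule.mem_orthogonal _ _).mp hmem' _ hmem
    exact Subtype.ext (sub_eq_zero.mp (inner_self_eq_zero.mp h2))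
  have hgbij : Function.Bijective g :=
    ⟨hginj, (LinearMap.injective_iff_surjective).mp hginj⟩
  set e : K ≃ₗ[ℝ] K := LinearEquiv.ofBijective g hgbij with he
  have hesymm : ∀ a : K, g (e.symm a) = a := fun a => e.apply_symm_apply a
  set P := K.orthogonalProjectionOnto with hP
  set Nlin : E →ₗ[ℝ] E :=
    K.subtype ∘ₗ (e.symm : K →ₗ[ℝ] K) ∘ₗ (P : E →ₗ[ℝ] K) with hNlin
  set N : E →L[ℝ] E := LinearMap.toContinuousLinearMap Nlin with hN
  have hNapp : ∀ x : E, N x = ((e.symm (P x) : K) : E) := fun x => rfl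
  have hinnP : ∀ (v : K) (y : E), ⟪(v : E), y⟫ = ⟪(v : E), ((P y : K) : E)⟫ := by
    intro v y
    have hmem : y - ((P y : K) : E) ∈ Kᗮ := K.sub_starProjection_mem_orthogonal y
    have h0 : ⟪(v : E), y - ((P y : K) : E)⟫ = 0 := hmem (v : E) v.2
    have h1 := inner_sub_right (𝕜 := ℝ) (v : E) y ((P y : K) : E)
    rw [h0] at h1
    linarith
  have hesym : ∀ a b : K,
      ⟪((e.symm a : K) : E), (b : E)⟫ = ⟪(a : E), ((e.symm b : K) : E)⟫ := by
    intro a b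
    conv_lhs => rw [← hesymm b]
    conv_rhs => rw [← hesymm a]
    rw [hgcoe, hgcoe, hGsym]
  have hNsa : ContinuousLinearMap.adjoint N = N := by
    symm
    rw [ContinuousLinearMap.eq_adjoint_iff]
    intro x y
    rw [hNapp, hNapp]
    calc ⟪((e.symm (P x) : K) : E), y⟫
        = ⟪((e.symm (P x) : K) : E), ((P y : K) : E)⟫ := hinnP _ _
      _ = ⟪((P x : K) : E), ((e.symm (P y) : K) : E)⟫ := hesym _ _
      _ = ⟪((e.symm (P y) : K) : E), ((P x : K) : E)⟫ := real_inner_comm _ _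
      _ = ⟪((e.symm (P y) : K) : E), x⟫ := (hinnP _ _).symm
      _ = ⟪x, ((e.symm (P y) : K) : E)⟫ := real_inner_comm _ _
  have hKbot : Kᗮ = LinearMap.ker (G : E →ₗ[ℝ] E) := by
    rw [hK, Submodule.orthogonal_orthogonal]
  have hNG : ∀ v : E, Φ (N (G v)) = Φ v := by
    intro v
    have hq : v - ((P v : K) : E) ∈ LinearMap.ker (G : E →ₗ[ℝ] E) := by
      rw [← hKbot]; exact K.sub_starProjection_mem_orthogonal v
    have hGv : G v = G ((P v : K) : E) := by
      have h0 : G (v - ((P v : K) : E)) = 0 := hq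
      rwa [map_sub, sub_eq_zero] at h0
    have hPGv : (P (G v) : K) = ⟨G v, hGK v⟩ := by
      apply Subtype.ext
      exact Submodule.starProjection_eq_self_iff.mpr (hGK v)
    have hgPv : g (P v) = ⟨G v, hGK v⟩ := by
      apply Subtype.ext
      rw [hgcoe]
      exact hGv.symm
    have hNGv : N (G v) = ((P v : K) : E) := by
      rw [hNapp, hPGv, ← hgPv]
      exact congrArg _ (e.symm_apply_apply (P v))
    rw [hNGv]
    have hΦq : Φ v - Φ ((P v : K) : E) = 0 := by
      rw [← map_sub]; exact (hker _).mp hq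
    exact (sub_eq_zero.mp hΦq).symm
  refine ⟨N, hNsa, ?_⟩
  have hle1 : ∀ i, LinearMap.range ((φ (u i) : U →ₗ[ℝ] W))
      ≤ LinearMap.range (Φ : E →ₗ[ℝ] W) := by
    intro i
    rintro w ⟨x, rfl⟩
    refine ⟨WithLp.toLp 2 (Pi.single i x : ∀ _ : Fin n, U), ?_⟩
    show Φ _ = _
    rw [hΦ, WithLp.ofLp_toLp, Finset.sum_eq_single i]
    · have h1 : (Pi.single i x : ∀ _ : Fin n, U) i = x := by simp
      exact congrArg _ h1
    · intro j _ hj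
      have h1 : (Pi.single i x : ∀ _ : Fin n, U) j = 0 := by simp [Pi.single_eq_of_ne hj]
      rw [show (φ (u j)) ((Pi.single i x : ∀ _ : Fin n, U) j) = (φ (u j)) (0 : U) from congrArg _ h1, map_zero]
    · intro h
      exact absurd (Finset.mem_univ i) h
  have hsumle : (∑ i, LinearMap.range ((φ (u i) : U →ₗ[ℝ] W)))
      ≤ LinearMap.range (Φ : E →ₗ[ℝ] W) := by
    refine Finset.sum_induction _ (fun S => S ≤ LinearMap.range (Φ : E →ₗ[ℝ] W))
      (fun a b ha hb => ?_) zero_le (fun i _ => hle1 i)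
    rw [Submodule.add_eq_sup]
    exact sup_le ha hb
  have hmemrange : ∀ z : E, Φ z ∈ LinearMap.range (Pr : W →ₗ[ℝ] W) := by
    intro z
    rw [hrange, hΦ]
    refine Submodule.sum_mem _ (fun i _ => ?_)
    have hone : LinearMap.range ((φ (u i) : U →ₗ[ℝ] W))
        ≤ ∑ j, LinearMap.range ((φ (u j) : U →ₗ[ℝ] W)) :=
      Finset.single_le_sum (f := fun j => LinearMap.range ((φ (u j) : U →ₗ[ℝ] W)))
        (fun j _ => zero_le) (Finset.mem_univ i)
    exact hone ⟨z i, rfl⟩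
  have hPr2 : ∀ w : W, Pr (Pr w) = Pr w := fun w => DFunLike.congr_fun hidem w
  ext w
  show Pr w = Φ (N (Φs w))
  have hPrw : Pr w ∈ LinearMap.range (Φ : E →ₗ[ℝ] W) := by
    apply hsumle
    rw [← hrange]
    exact ⟨w, rfl⟩
  obtain ⟨v, hv⟩ := hPrw
  have hb : Φs (w - Pr w) = 0 := by
    refine ext_inner_right ℝ (fun z => ?_)
    rw [inner_zero_left, hΦsdef, ContinuousLinearMap.adjoint_inner_left]
    obtain ⟨y, hy⟩ := hmemrange z
    rw [← hy]
    show ⟪w - Pr w, Pr y⟫ = 0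
    rw [← ContinuousLinearMap.adjoint_inner_left, hsa, map_sub, hPr2, sub_self,
      inner_zero_left]
  have hw : Φs w = G v := by
    have h1 : Φs w - Φs (Pr w) = 0 := by rw [← map_sub]; exact hb
    have h2 : Φs w = Φs (Pr w) := sub_eq_zero.mp h1
    rw [h2, ← hv]
    rfl
  calc Pr w = Φ v := hv.symm
    _ = Φ (N (G v)) := (hNG v).symm
    _ = Φ (N (Φs w)) := by rw [hw]
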